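/- Let ρ be the norm on ℝ² defined by ρ(x, y) = |x| + max(|x|, |y|). There exists f₀ ∈ ℝ² such that the problem inf{ρ(f₀ − x) + ρ*(x) : x ∈ ℝ²} admits infinitely many minimizers. -/

import Mathlib

/-- The norm `ρ(x, y) = |x| + max(|x|, |y|)` on `ℝ²`. -/
noncomputable def rhoA (p : ℝ × ℝ) : ℝ := |p.1| + max |p.1| |p.2|

/-- Legendre transform of `ρ` (with the standard inner product on `ℝ²`), valued in
`EReal`: `ρ*(y) = sup {x·y − ρ(x) : x ∈ ℝ²}`. -/
noncomputable def rhoAStar (y : ℝ × ℝ) : EReal :=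
  ⨆ x : ℝ × ℝ, ((x.1 * y.1 + x.2 * y.2 - rhoA x : ℝ) : EReal)

lemma rhoAStar_ge (y x : ℝ × ℝ) :
    ((x.1 * y.1 + x.2 * y.2 - rhoA x : ℝ) : EReal) ≤ rhoAStar y :=
  le_iSup (fun x : ℝ × ℝ => ((x.1 * y.1 + x.2 * y.2 - rhoA x : ℝ) : EReal)) x

lemma rhoAStar_seg (s : ℝ) (hs0 : 0 ≤ s) (hs1 : s ≤ 1) :
    rhoAStar (2 - s, s) = 0 := by
  refine le_antisymm ?_ ?_
  · refine iSup_le fun x => ?_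
    have h : x.1 * (2 - s) + x.2 * s - rhoA x ≤ 0 := by
      have h1 : x.1 ≤ |x.1| := le_abs_self _
      have h2 : x.2 ≤ |x.2| := le_abs_self _
      have h3 : |x.1| ≤ max |x.1| |x.2| := le_max_left _ _
      have h4 : |x.2| ≤ max |x.1| |x.2| := le_max_right _ _
      unfold rhoA
      nlinarith [abs_nonneg x.1, abs_nonneg x.2]
    exact_mod_cast EReal.coe_le_coe_iff.2 (by linarith : x.1 * (2 - s) + x.2 * s - rhoA x ≤ (0:ℝ))
  · have := rhoAStar_ge (2 - s, s) (0, 0)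
    simpa [rhoA] using this

/-- For the norm `ρ(x, y) = |x| + max(|x|, |y|)` on `ℝ²`, there
exists `f₀ ∈ ℝ²` such that the problem `inf {ρ(f₀ − x) + ρ*(x) : x ∈ ℝ²}` admits
infinitely many minimizers. -/
theorem stmt_15 :
    ∃ f₀ : ℝ × ℝ,
      {x : ℝ × ℝ | ∀ z : ℝ × ℝ,
          (↑(rhoA (f₀ - x)) : EReal) + rhoAStar x
            ≤ (↑(rhoA (f₀ - z)) : EReal) + rhoAStar z}.Infinite := by
  refine ⟨(2, 1), ?_⟩
  have lower : ∀ z : ℝ × ℝ,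
      ((1 : ℝ) : EReal) ≤ (↑(rhoA ((2, 1) - z)) : EReal) + rhoAStar z := by
    intro z
    have h1 : ((1 * z.1 + 1 * z.2 - rhoA (1, 1) : ℝ) : EReal) ≤ rhoAStar z :=
      rhoAStar_ge z (1, 1)
    have h2 : rhoA (1, 1) = 2 := by norm_num [rhoA]
    have h3 : (3 : ℝ) - z.1 - z.2 ≤ rhoA ((2, 1) - z) := by
      have h4 : (2 : ℝ) - z.1 ≤ |2 - z.1| := le_abs_self _
      have h5 : (1 : ℝ) - z.2 ≤ |1 - z.2| := le_abs_self _
      have h6 : |1 - z.2| ≤ max |2 - z.1| |1 - z.2| := le_max_right _ _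
      simp only [rhoA, Prod.fst_sub, Prod.snd_sub]
      norm_num
      linarith
    calc ((1 : ℝ) : EReal)
        ≤ ((rhoA ((2,1) - z) + (1 * z.1 + 1 * z.2 - rhoA (1,1)) : ℝ) : EReal) := by
          rw [EReal.coe_le_coe_iff]; rw [h2]; linarith
      _ = (↑(rhoA ((2,1) - z)) : EReal) + ((1 * z.1 + 1 * z.2 - rhoA (1,1) : ℝ) : EReal) := by
          rw [EReal.coe_add]
      _ ≤ (↑(rhoA ((2,1) - z)) : EReal) + rhoAStar z := add_le_add le_rfl h1
  have mem : ∀ s : ℝ, s ∈ Set.Icc (0:ℝ) (1/2) →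
      ((2 - s, s) : ℝ × ℝ) ∈ {x : ℝ × ℝ | ∀ z : ℝ × ℝ,
          (↑(rhoA ((2,1) - x)) : EReal) + rhoAStar x
            ≤ (↑(rhoA ((2,1) - z)) : EReal) + rhoAStar z} := by
    intro s hs z
    obtain ⟨hs0, hs1⟩ := hs
    have hst : rhoAStar (2 - s, s) = 0 := rhoAStar_seg s hs0 (by linarith)
    have hd : rhoA ((2,1) - (2 - s, s)) = 1 := by
      simp only [rhoA, Prod.fst_sub, Prod.snd_sub]
      have e1 : (2:ℝ) - (2 - s) = s := by ring
      rw [e1]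
      rw [abs_of_nonneg hs0, abs_of_nonneg (by linarith : (0:ℝ) ≤ 1 - s)]
      rw [max_eq_right (by linarith : s ≤ 1 - s)]
      ring
    rw [hst, hd, add_zero]
    exact lower z
  have hinj : Set.InjOn (fun s : ℝ => ((2 - s, s) : ℝ × ℝ)) (Set.Icc 0 (1/2)) := by
    intro a _ b _ h
    exact (Prod.mk.injEq _ _ _ _ ▸ h).2
  have hInf : (Set.Icc (0:ℝ) (1/2)).Infinite := Set.Icc_infinite (by norm_num)
  exact Set.Infinite.mono (Set.image_subset_iff.2 mem) (hInf.image hinj)
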